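/- arXiv:1212.5576 — 2 statements merged into one kernel-verified Lean document; each statement's English description precedes it below -/
import Mathlib

section
/- Proposition 3.1: Let α be a countable ordinal (with a fixed choice of cofinal sequences defining the Schreier family S_α). The unit vector basis (e_n) of the Schreier space X_α satisfies subsequential 2-X_α-upper block estimates in itself: if (x_j) is a sequence of nonzero finitely supported functions x_j : ℕ → ℝ with ‖x_j‖_α = 1 and max supp x_j < min supp x_{j+1} for all j, and m_j = min supp x_j, then ‖Σ a_j x_j‖_α ≤ 2 ‖Σ a_j e_{m_j}‖_α for every finitely supported real sequence (a_j). -/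
open Filter Topology Metric

noncomputable section


/-! ### Schreier families on ℕ+ = {1,2,...} -/

/-- The successor step of the Schreier hierarchy. -/
def schreierSucc (S : Set (Finset ℕ+)) : Set (Finset ℕ+) :=
  insert ∅ {F | ∃ (m : ℕ) (hm : 0 < m) (Es : Fin m → Finset ℕ+),
    (∀ i, Es i ∈ S) ∧ (∀ i, (Es i).Nonempty) ∧
    (∀ i j : Fin m, i < j → ∀ p ∈ Es i, ∀ q ∈ Es j, p < q) ∧
    (∀ p ∈ Es ⟨0, hm⟩, m ≤ (p : ℕ)) ∧
    F = Finset.univ.biUnion Es}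

/-- The Schreier family `S_o`, relative to a choice `c` of cofinal sequences at limit
ordinals. -/
def schreier (c : Ordinal → ℕ+ → Ordinal) (o : Ordinal) : Set (Finset ℕ+) :=
  Ordinal.limitRecOn o
    (insert ∅ {E | ∃ n : ℕ+, E = {n}})
    (fun _ S => schreierSucc S)
    (fun l _ ih =>
      insert ∅ {F | ∃ (n : ℕ+) (h : c l n < l), F ∈ ih (c l n) h ∧ ∀ k ∈ F, n ≤ k})

/-- `c` is a legitimate choice of cofinal sequences: at every countable limit ordinal `o`,
`c o` is a strictly increasing sequence of ordinals below `o` with supremum `o`. -/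
def IsCofinalChoice (c : Ordinal → ℕ+ → Ordinal) : Prop :=
  ∀ o : Ordinal, Order.IsSuccLimit o → o < Ordinal.omega 1 →
    StrictMono (c o) ∧ (∀ n : ℕ+, c o n < o) ∧ ∀ b < o, ∃ n : ℕ+, b ≤ c o n

/-- The Schreier norm `‖x‖_o = sup { Σ_{n ∈ E} |x n| : E ∈ S_o }` of a finitely supported
function. -/
def schreierNorm (c : Ordinal → ℕ+ → Ordinal) (o : Ordinal) (x : ℕ+ →₀ ℝ) : ℝ :=
  sSup {r : ℝ | ∃ E ∈ schreier c o, r = ∑ n ∈ E, |x n|}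

/-- The finitely supported function `Σ_n a_n e_{k n}`. -/
def schreierComb (k : ℕ → ℕ+) (a : ℕ →₀ ℝ) : ℕ+ →₀ ℝ :=
  a.sum fun n r => Finsupp.single (k n) r

section Aux

variable {c : Ordinal → ℕ+ → Ordinal}

lemma schreier_zero : schreier c 0 = insert ∅ {E | ∃ n : ℕ+, E = {n}} :=
  Ordinal.limitRecOn_zero _ _ _

lemma schreier_succ (o : Ordinal) :
    schreier c (Order.succ o) = schreierSucc (schreier c o) :=
  Ordinal.limitRecOn_succ _ _ _ _

lemma schreier_limit {l : Ordinal} (hl : Order.IsSuccLimit l) :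
    schreier c l = insert ∅ {F | ∃ (n : ℕ+) (h : c l n < l),
      F ∈ schreier c (c l n) ∧ ∀ k ∈ F, n ≤ k} :=
  Ordinal.limitRecOn_limit _ _ _ _ hl

lemma empty_mem_schreier (o : Ordinal) : ∅ ∈ schreier c o := by
  rcases Ordinal.zero_or_succ_or_isSuccLimit o with h | ⟨a, rfl⟩ | h
  · rw [h, schreier_zero]; exact Set.mem_insert _ _
  · rw [schreier_succ]; exact Set.mem_insert _ _
  · rw [schreier_limit h]; exact Set.mem_insert _ _

lemma schreier_hereditary (o : Ordinal) :
    ∀ E ∈ schreier c o, ∀ F ⊆ E, F ∈ schreier c o := by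
  induction o using Ordinal.limitRecOn with
  | zero =>
    intro E hE F hF
    rw [schreier_zero] at hE ⊢
    rcases hE with rfl | ⟨n, rfl⟩
    · left; exact Finset.subset_empty.mp hF
    · rcases Finset.subset_singleton_iff.mp hF with rfl | rfl
      · exact Set.mem_insert _ _
      · exact Set.mem_insert_of_mem _ ⟨n, rfl⟩
  | add_one o ih =>
    rw [Ordinal.add_one_eq_succ]
    intro E hE F hF
    rw [schreier_succ] at hE ⊢
    rcases hE with rfl | ⟨m, hm, Es, hS, hne, hord, hmin, rfl⟩
    · left; exact Finset.subset_empty.mp hF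
    rcases eq_or_ne F ∅ with rfl | hFne
    · exact Set.mem_insert _ _
    right
    set I : Finset (Fin m) := Finset.univ.filter (fun i => ((Es i) ∩ F).Nonempty) with hI
    have hIne : I.Nonempty := by
      obtain ⟨n, hn⟩ := Finset.nonempty_iff_ne_empty.mpr hFne
      obtain ⟨i, _, hni⟩ := Finset.mem_biUnion.mp (hF hn)
      exact ⟨i, Finset.mem_filter.mpr ⟨Finset.mem_univ _, ⟨n, Finset.mem_inter.mpr ⟨hni, hn⟩⟩⟩⟩
    have hm' : 0 < I.card := Finset.card_pos.mpr hIne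
    set e := I.orderIsoOfFin rfl with he
    refine ⟨I.card, hm', fun j => Es (e j) ∩ F, fun j => ih _ (hS _) _ Finset.inter_subset_left,
      fun j => ?_, ?_, ?_, ?_⟩
    · exact (Finset.mem_filter.mp (e j).2).2
    · intro i j hij p hp q hq
      exact hord _ _ (e.strictMono hij) p (Finset.mem_inter.mp hp).1 q (Finset.mem_inter.mp hq).1
    · intro p hp
      have hpm : m ≤ (p : ℕ) := by
        have hp' : p ∈ Es (e ⟨0, hm'⟩) := (Finset.mem_inter.mp hp).1
        rcases eq_or_ne ((e ⟨0, hm'⟩ : Fin m)) ⟨0, hm⟩ with h0 | h0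
        · exact hmin p (h0 ▸ hp')
        · have hlt : (⟨0, hm⟩ : Fin m) < e ⟨0, hm'⟩ :=
            lt_of_le_of_ne (Fin.mk_le_of_le_val (Nat.zero_le _)) (Ne.symm h0)
          obtain ⟨q, hq⟩ := hne ⟨0, hm⟩
          exact le_of_lt (lt_of_le_of_lt (hmin q hq) (hord _ _ hlt q hq p hp'))
      calc I.card ≤ m := by simpa using Finset.card_le_univ I
        _ ≤ (p : ℕ) := hpm
    · ext n
      simp only [Finset.mem_biUnion, Finset.mem_univ, true_and, Finset.mem_inter]
      constructor
      · intro hn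
        obtain ⟨i, _, hni⟩ := Finset.mem_biUnion.mp (hF hn)
        have hiI : i ∈ I := Finset.mem_filter.mpr ⟨Finset.mem_univ _, ⟨n, Finset.mem_inter.mpr ⟨hni, hn⟩⟩⟩
        refine ⟨e.symm ⟨i, hiI⟩, ?_, hn⟩
        have : (e (e.symm ⟨i, hiI⟩) : Fin m) = i := by rw [OrderIso.apply_symm_apply]
        rw [this]; exact hni
      · rintro ⟨j, -, hn⟩; exact hn
  | limit l hl ih =>
    intro E hE F hF
    rw [schreier_limit hl] at hE ⊢
    rcases hE with rfl | ⟨n, h, hE, hk⟩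
    · left; exact Finset.subset_empty.mp hF
    · exact Set.mem_insert_of_mem _ ⟨n, h, ih _ h _ hE _ hF, fun k hk' => hk k (hF hk')⟩

lemma schreier_spread (o : Ordinal) :
    ∀ E ∈ schreier c o, ∀ f : ℕ+ → ℕ+,
      (∀ p ∈ E, ∀ q ∈ E, p < q → f p < f q) → (∀ p ∈ E, p ≤ f p) →
      E.image f ∈ schreier c o := by
  induction o using Ordinal.limitRecOn with
  | zero =>
    intro E hE f _ _
    rw [schreier_zero] at hE ⊢
    rcases hE with rfl | ⟨n, rfl⟩
    · left; simp
    · right; exact ⟨f n, by simp⟩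
  | add_one o ih =>
    rw [Ordinal.add_one_eq_succ]
    intro E hE f hmono hle
    rw [schreier_succ] at hE ⊢
    rcases hE with rfl | ⟨m, hm, Es, hS, hne, hord, hmin, rfl⟩
    · left; simp
    right
    have hsub : ∀ i, Es i ⊆ Finset.univ.biUnion Es := fun i =>
      Finset.subset_biUnion_of_mem Es (Finset.mem_univ i)
    refine ⟨m, hm, fun i => (Es i).image f, ?_, fun i => (hne i).image f, ?_, ?_, ?_⟩
    · intro i
      exact ih _ (hS i) f (fun p hp q hq => hmono p (hsub i hp) q (hsub i hq))
        (fun p hp => hle p (hsub i hp))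
    · intro i j hij p hp q hq
      obtain ⟨p0, hp0, rfl⟩ := Finset.mem_image.mp hp
      obtain ⟨q0, hq0, rfl⟩ := Finset.mem_image.mp hq
      exact hmono p0 (hsub i hp0) q0 (hsub j hq0) (hord i j hij p0 hp0 q0 hq0)
    · intro p hp
      obtain ⟨p0, hp0, rfl⟩ := Finset.mem_image.mp hp
      exact le_trans (hmin p0 hp0) (hle p0 (hsub _ hp0))
    · rw [Finset.biUnion_image]
  | limit l hl ih =>
    intro E hE f hmono hle
    rw [schreier_limit hl] at hE ⊢
    rcases hE with rfl | ⟨n, h, hE, hk⟩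
    · left; simp
    right
    refine ⟨n, h, ih _ h _ hE f hmono hle, ?_⟩
    intro k hk'
    obtain ⟨p, hp, rfl⟩ := Finset.mem_image.mp hk'
    exact le_trans (hk p hp) (hle p hp)

lemma singleton_mem_schreier (hc : IsCofinalChoice c) (o : Ordinal) :
    o < Ordinal.omega 1 → ∀ n : ℕ+, ({n} : Finset ℕ+) ∈ schreier c o := by
  induction o using Ordinal.limitRecOn with
  | zero =>
    intro _ n
    rw [schreier_zero]
    exact Set.mem_insert_of_mem _ ⟨n, rfl⟩
  | add_one o ih =>
    rw [Ordinal.add_one_eq_succ]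
    intro ho n
    rw [schreier_succ]
    right
    refine ⟨1, one_pos, fun _ => {n}, fun _ => ih ((Order.lt_succ o).trans ho) n,
      fun _ => Finset.singleton_nonempty n, ?_, ?_, by simp⟩
    · intro i j hij
      exact absurd hij (by omega)
    · intro p _
      exact p.2
  | limit l hl ih =>
    intro ho n
    rw [schreier_limit hl]
    right
    have h1 : c l 1 < l := (hc l hl ho).2.1 1
    exact ⟨1, h1, ih _ h1 (h1.trans ho) n, fun k _ => k.one_le⟩

lemma schreierNorm_bddAbove (o : Ordinal) (x : ℕ+ →₀ ℝ) :
    BddAbove {r : ℝ | ∃ E ∈ schreier c o, r = ∑ n ∈ E, |x n|} := by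
  refine ⟨∑ n ∈ x.support, |x n|, ?_⟩
  rintro r ⟨E, _, rfl⟩
  have h1 : ∑ n ∈ E, |x n| = ∑ n ∈ E ∩ x.support, |x n| := by
    refine (Finset.sum_subset Finset.inter_subset_left fun n hn hn' => ?_).symm
    have : n ∉ x.support := fun h => hn' (Finset.mem_inter.mpr ⟨hn, h⟩)
    rw [Finsupp.notMem_support_iff] at this
    simp [this]
  rw [h1]
  exact Finset.sum_le_sum_of_subset_of_nonneg Finset.inter_subset_right
    (fun _ _ _ => abs_nonneg _)

lemma sum_abs_le_schreierNorm {o : Ordinal} {E : Finset ℕ+} (hE : E ∈ schreier c o)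
    (x : ℕ+ →₀ ℝ) : ∑ n ∈ E, |x n| ≤ schreierNorm c o x :=
  le_csSup (schreierNorm_bddAbove o x) ⟨E, hE, rfl⟩

lemma schreierNorm_nonneg (o : Ordinal) (x : ℕ+ →₀ ℝ) : 0 ≤ schreierNorm c o x := by
  have := sum_abs_le_schreierNorm (empty_mem_schreier (c := c) o) x
  simpa using this

lemma schreierNorm_le {o : Ordinal} {x : ℕ+ →₀ ℝ} {b : ℝ}
    (hb : ∀ E ∈ schreier c o, ∑ n ∈ E, |x n| ≤ b) : schreierNorm c o x ≤ b := by
  refine csSup_le ⟨0, ∅, empty_mem_schreier o, by simp⟩ ?_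
  rintro r ⟨E, hE, rfl⟩
  exact hb E hE

end Aux

/-- **Proposition 3.1.** The unit vector basis of the Schreier space `X_α` satisfies
subsequential `2`-`X_α`-upper block estimates in itself. -/
theorem schreier_upper_block_estimates_self
    (c : Ordinal → ℕ+ → Ordinal) (hc : IsCofinalChoice c)
    (α : Ordinal) (hα : α < Ordinal.omega 1)
    (x : ℕ → ℕ+ →₀ ℝ) (hx0 : ∀ j, x j ≠ 0)
    (hxnorm : ∀ j, schreierNorm c α (x j) = 1)
    (hblock : ∀ j, ∀ p ∈ (x j).support, ∀ q ∈ (x (j + 1)).support, p < q)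
    (m : ℕ → ℕ+)
    (hm : ∀ j, m j = (x j).support.min' (Finsupp.support_nonempty_iff.mpr (hx0 j))) :
    ∀ a : ℕ →₀ ℝ,
      schreierNorm c α (a.sum fun j r => r • x j) ≤
        2 * schreierNorm c α (schreierComb m a) := by
  classical
  intro a
  -- blocks are fully ordered
  have hblock' : ∀ j j' : ℕ, j < j' → ∀ p ∈ (x j).support, ∀ q ∈ (x j').support, p < q := by
    intro j j' h
    induction j' with
    | zero => omega
    | succ j'' ih =>
      intro p hp q hq
      rcases Nat.lt_or_ge j j'' with h2 | h2
      · have hmem : m j'' ∈ (x j'').support := by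
          rw [hm j'']; exact Finset.min'_mem _ _
        exact lt_trans (ih h2 p hp _ hmem) (hblock j'' _ hmem q hq)
      · have hj : j = j'' := by omega
        subst hj
        exact hblock j p hp q hq
  have hmemm : ∀ j, m j ∈ (x j).support := by
    intro j; rw [hm j]; exact Finset.min'_mem _ _
  have hmmono : StrictMono m := fun j j' h => hblock' j j' h _ (hmemm j) _ (hmemm j')
  have hcomb : ∀ j, schreierComb m a (m j) = a j := by
    intro j
    rw [schreierComb, Finsupp.sum_apply, Finsupp.sum]
    rw [Finset.sum_eq_single j]
    · rw [Finsupp.single_apply, if_pos rfl]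
    · intro b _ hbj
      rw [Finsupp.single_apply, if_neg (fun h => hbj (hmmono.injective h))]
    · intro hj
      rw [Finsupp.single_apply, if_pos rfl, Finsupp.notMem_support_iff.mp hj]
  set y := a.sum fun j r => r • x j with hy
  have hyn : ∀ n, y n = ∑ j ∈ a.support, a j * x j n := by
    intro n
    rw [hy, Finsupp.sum_apply, Finsupp.sum]
    simp [Finsupp.smul_apply, smul_eq_mul]
  have hN0 : 0 ≤ schreierNorm c α (schreierComb m a) := schreierNorm_nonneg α _
  refine schreierNorm_le ?_
  intro E hE
  set J : Finset ℕ := a.support.filter (fun j => (E ∩ (x j).support).Nonempty) with hJdef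
  have step1 : ∑ n ∈ E, |y n| ≤ ∑ j ∈ J, |a j| * ∑ n ∈ E, |x j n| := by
    calc ∑ n ∈ E, |y n| ≤ ∑ n ∈ E, ∑ j ∈ a.support, |a j| * |x j n| := by
          refine Finset.sum_le_sum fun n _ => ?_
          rw [hyn n]
          refine (Finset.abs_sum_le_sum_abs _ _).trans ?_
          refine le_of_eq (Finset.sum_congr rfl fun j _ => abs_mul _ _)
      _ = ∑ j ∈ a.support, |a j| * ∑ n ∈ E, |x j n| := by
          rw [Finset.sum_comm]
          exact Finset.sum_congr rfl fun j _ => (Finset.mul_sum _ _ _).symm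
      _ = ∑ j ∈ J, |a j| * ∑ n ∈ E, |x j n| := by
          refine (Finset.sum_subset (Finset.filter_subset _ _) ?_).symm
          intro j hj hjJ
          have hempty : ∀ n ∈ E, |x j n| = 0 := by
            intro n hn
            by_contra hne
            refine hjJ (Finset.mem_filter.mpr ⟨hj, ⟨n, Finset.mem_inter.mpr ⟨hn, ?_⟩⟩⟩)
            rw [Finsupp.mem_support_iff]
            intro h0
            exact hne (by rw [h0, abs_zero])
          rw [Finset.sum_eq_zero hempty, mul_zero]
  rcases Finset.eq_empty_or_nonempty J with hJe | hJne
  · rw [hJe] at step1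
    simpa using step1.trans (by positivity)
  set j0 := J.min' hJne with hj0
  have hj0J : j0 ∈ J := Finset.min'_mem _ _
  -- each factor is at most 1
  have hfac : ∀ j ∈ J, |a j| * ∑ n ∈ E, |x j n| ≤ |a j| := by
    intro j _
    have h1 : ∑ n ∈ E, |x j n| ≤ 1 := by
      rw [← hxnorm j]; exact sum_abs_le_schreierNorm hE (x j)
    calc |a j| * ∑ n ∈ E, |x j n| ≤ |a j| * 1 :=
          mul_le_mul_of_nonneg_left h1 (abs_nonneg _)
      _ = |a j| := mul_one _
  -- first coefficient
  have partA : |a j0| ≤ schreierNorm c α (schreierComb m a) := by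
    have hsing := singleton_mem_schreier hc α hα (m j0)
    have := sum_abs_le_schreierNorm hsing (schreierComb m a)
    simpa [hcomb j0] using this
  -- remaining coefficients
  have hJsupp : ∀ j ∈ J, (E ∩ (x j).support).Nonempty := fun j hj =>
    (Finset.mem_filter.mp hj).2
  set nE : ℕ → ℕ+ := fun j =>
    if h : (E ∩ (x j).support).Nonempty then (E ∩ (x j).support).min' h else 1 with hnE
  have hnEmem : ∀ j ∈ J, nE j ∈ E ∩ (x j).support := by
    intro j hj
    rw [hnE]
    simp only [dif_pos (hJsupp j hj)]
    exact Finset.min'_mem _ _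
  have hnEE : ∀ j ∈ J, nE j ∈ E := fun j hj => (Finset.mem_inter.mp (hnEmem j hj)).1
  have hnEs : ∀ j ∈ J, nE j ∈ (x j).support := fun j hj => (Finset.mem_inter.mp (hnEmem j hj)).2
  have hnEmono : ∀ i ∈ J, ∀ i' ∈ J, i < i' → nE i < nE i' := fun i hi i' hi' h =>
    hblock' i i' h _ (hnEs i hi) _ (hnEs i' hi')
  set pred : ℕ → ℕ := fun j =>
    if h : (J.filter (fun i => i < j)).Nonempty then (J.filter (fun i => i < j)).max' h else 0
    with hpred
  have hpredfacts : ∀ j ∈ J.erase j0,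
      pred j ∈ J ∧ pred j < j ∧ ∀ i ∈ J, i < j → i ≤ pred j := by
    intro j hj
    obtain ⟨hjne, hjJ⟩ := Finset.mem_erase.mp hj
    have hj0lt : j0 < j := lt_of_le_of_ne (Finset.min'_le _ _ hjJ) (Ne.symm hjne)
    have hne : (J.filter (fun i => i < j)).Nonempty :=
      ⟨j0, Finset.mem_filter.mpr ⟨hj0J, hj0lt⟩⟩
    have hval : pred j = (J.filter (fun i => i < j)).max' hne := by
      rw [hpred]; exact dif_pos hne
    have hmem := Finset.max'_mem _ hne
    rw [Finset.mem_filter] at hmem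
    refine ⟨hval ▸ hmem.1, hval ▸ hmem.2, ?_⟩
    intro i hi hilt
    rw [hval]
    exact Finset.le_max' (J.filter (fun k => k < j)) i (Finset.mem_filter.mpr ⟨hi, hilt⟩)
  set g : ℕ+ → ℕ+ := fun k =>
    if h : (J.filter (fun i => k < nE i)).Nonempty then m ((J.filter (fun i => k < nE i)).min' h)
    else 1 with hg
  have hkey : ∀ j ∈ J.erase j0, g (nE (pred j)) = m j := by
    intro j hj
    obtain ⟨hpJ, hplt, hpmax⟩ := hpredfacts j hj
    have hjJ : j ∈ J := (Finset.mem_erase.mp hj).2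
    have hjT : j ∈ J.filter (fun i => nE (pred j) < nE i) :=
      Finset.mem_filter.mpr ⟨hjJ, hnEmono _ hpJ _ hjJ hplt⟩
    have hTne : (J.filter (fun i => nE (pred j) < nE i)).Nonempty := ⟨j, hjT⟩
    have hminT : (J.filter (fun i => nE (pred j) < nE i)).min' hTne = j := by
      refine le_antisymm (Finset.min'_le _ _ hjT) (Finset.le_min' _ _ _ ?_)
      intro i hi
      rw [Finset.mem_filter] at hi
      by_contra hlt
      push_neg at hlt
      have hile : i ≤ pred j := hpmax i hi.1 hlt
      rcases eq_or_lt_of_le hile with rfl | hilt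
      · exact lt_irrefl _ hi.2
      · exact lt_asymm hi.2 (hnEmono _ hi.1 _ hpJ hilt)
    rw [hg]
    simp only [dif_pos hTne]
    rw [hminT]
  set G : Finset ℕ+ := (J.erase j0).image (fun j => nE (pred j)) with hG
  have hGsub : G ⊆ E := by
    intro p hp
    obtain ⟨j, hj, rfl⟩ := Finset.mem_image.mp hp
    exact hnEE _ (hpredfacts j hj).1
  have hGmem : G ∈ schreier c α := schreier_hereditary α E hE G hGsub
  -- order reflection for erase indices
  have horder : ∀ j ∈ J.erase j0, ∀ j' ∈ J.erase j0,
      nE (pred j) < nE (pred j') → j < j' := by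
    intro j hj j' hj' hlt
    obtain ⟨hpJ, hplt, hpmax⟩ := hpredfacts j hj
    obtain ⟨hpJ', hplt', hpmax'⟩ := hpredfacts j' hj'
    by_contra hge
    push_neg at hge
    rcases eq_or_lt_of_le hge with rfl | hlt2
    · exact lt_irrefl _ hlt
    · -- j' < j
      have : j' ≤ pred j := hpmax _ (Finset.mem_erase.mp hj').2 hlt2
      have hp'le : pred j' < pred j := lt_of_lt_of_le hplt' this
      exact lt_asymm hlt (hnEmono _ hpJ' _ hpJ hp'le)
  have hgG : ∀ p ∈ G, ∀ q ∈ G, p < q → g p < g q := by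
    intro p hp q hq hpq
    obtain ⟨j, hj, rfl⟩ := Finset.mem_image.mp hp
    obtain ⟨j', hj', rfl⟩ := Finset.mem_image.mp hq
    rw [hkey j hj, hkey j' hj']
    exact hmmono (horder j hj j' hj' hpq)
  have hgle : ∀ p ∈ G, p ≤ g p := by
    intro p hp
    obtain ⟨j, hj, rfl⟩ := Finset.mem_image.mp hp
    rw [hkey j hj]
    obtain ⟨hpJ, hplt, _⟩ := hpredfacts j hj
    exact le_of_lt (hblock' _ _ hplt _ (hnEs _ hpJ) _ (hmemm j))
  have hFmem : (J.erase j0).image m ∈ schreier c α := by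
    have h1 := schreier_spread α G hGmem g hgG hgle
    have h2 : G.image g = (J.erase j0).image m := by
      rw [hG, Finset.image_image]
      exact Finset.image_congr fun j hj => hkey j hj
    rwa [h2] at h1
  have partB : ∑ j ∈ J.erase j0, |a j| ≤ schreierNorm c α (schreierComb m a) := by
    have hsum : ∑ n ∈ (J.erase j0).image m, |schreierComb m a n| = ∑ j ∈ J.erase j0, |a j| := by
      rw [Finset.sum_image (fun i _ i' _ h => hmmono.injective h)]
      exact Finset.sum_congr rfl fun j _ => by rw [hcomb j]
    rw [← hsum]
    exact sum_abs_le_schreierNorm hFmem (schreierComb m a)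
  -- put it together
  have step2 : ∑ j ∈ J, |a j| * ∑ n ∈ E, |x j n| ≤ |a j0| + ∑ j ∈ J.erase j0, |a j| := by
    rw [← Finset.add_sum_erase J _ hj0J]
    refine add_le_add (hfac j0 hj0J) (Finset.sum_le_sum fun j hj => hfac j (Finset.mem_of_mem_erase hj))
  calc ∑ n ∈ E, |y n| ≤ |a j0| + ∑ j ∈ J.erase j0, |a j| := step1.trans step2
    _ ≤ schreierNorm c α (schreierComb m a) + schreierNorm c α (schreierComb m a) :=
        add_le_add partA partB
    _ = 2 * schreierNorm c α (schreierComb m a) := (two_mul _).symm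

end
end

section
/- (Proposition of Section 6, operator norm version of upper block estimates:) Let V be a Banach space with a normalized 1-unconditional basis (v_n), let C ≥ 1, and let X and E be Banach spaces where E has an FDD (E_n) (with coordinate projections Q_n) satisfying subsequential C-V-upper block estimates in E. Let ℓ ∈ ℕ, let 1 = k_0 < k_1 < ⋯ < k_ℓ be natural numbers, and let u_1, …, u_ℓ : X → E be bounded linear operators such that the range of u_n is contained in E_{k_{n-1}} ⊕ ⋯ ⊕ E_{k_n − 1} (equivalently Q_{[k_{n-1}, k_n − 1]} ∘ u_n = u_n) for each n. Then ‖Σ_{n=1}^ℓ u_n‖ ≤ C ‖Σ_{n=1}^ℓ ‖u_n‖ · v_{k_{n-1}}‖_V, where the left-hand side is the operator norm. -/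
open Filter Topology Metric

noncomputable section

/-! ### Finite dimensional decompositions (indexed by `ℕ`) -/

/-- A finite dimensional decomposition of `Z`: nonzero finite-dimensional subspaces `E n`
such that every `z` has a unique norm-convergent representation `z = Σ_n z_n`, `z_n ∈ E n`,
together with the (automatically continuous) coordinate projections. -/
structure FDD (Z : Type*) [NormedAddCommGroup Z] [NormedSpace ℝ Z] where
  E : ℕ → Submodule ℝ Z
  nontrivial : ∀ n, E n ≠ ⊥
  finiteDim : ∀ n, FiniteDimensional ℝ (E n)
  proj : ℕ → Z →L[ℝ] Z
  proj_mem : ∀ n z, proj n z ∈ E n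
  proj_sum : ∀ z : Z,
    Filter.Tendsto (fun N => ∑ n ∈ Finset.range N, proj n z) Filter.atTop (nhds z)
  rep_unique : ∀ (z : Z) (f : ℕ → Z), (∀ n, f n ∈ E n) →
    Filter.Tendsto (fun N => ∑ n ∈ Finset.range N, f n) Filter.atTop (nhds z) →
    ∀ n, f n = proj n z

namespace FDD

variable {Z : Type*} [NormedAddCommGroup Z] [NormedSpace ℝ Z] (F : FDD Z)

/-- The support of a vector with respect to an FDD. -/
def supp (z : Z) : Set ℕ := {n | F.proj n z ≠ 0}

/-- The minimum of the support. -/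
def minSupp (z : Z) : ℕ := sInf (F.supp z)

/-- The maximum of the support. -/
def maxSupp (z : Z) : ℕ := sSup (F.supp z)

/-- A block sequence with respect to an FDD: nonzero, finitely supported vectors with
successive supports. -/
def IsBlockSeq (z : ℕ → Z) : Prop :=
  (∀ n, z n ≠ 0) ∧ (∀ n, (F.supp (z n)).Finite) ∧
    ∀ n, ∀ i ∈ F.supp (z n), ∀ j ∈ F.supp (z (n + 1)), i < j

/-- Bimonotonicity: all interval projections have norm at most one. -/
def Bimonotone : Prop := ∀ a b : ℕ, ‖∑ i ∈ Finset.Icc a b, F.proj i‖ ≤ 1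

/-- A shrinking FDD. -/
def Shrinking : Prop :=
  ∀ f : Z →L[ℝ] ℝ,
    Filter.Tendsto
      (fun N => ‖f.comp (ContinuousLinearMap.id ℝ Z - ∑ i ∈ Finset.range N, F.proj i)‖)
      Filter.atTop (nhds 0)

/-- A boundedly-complete FDD. -/
def BoundedlyComplete : Prop :=
  ∀ f : ℕ → Z, (∀ n, f n ∈ F.E n) →
    BddAbove (Set.range fun N => ‖∑ n ∈ Finset.range N, f n‖) →
    ∃ z : Z, Filter.Tendsto (fun N => ∑ n ∈ Finset.range N, f n) Filter.atTop (nhds z)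

end FDD

/-- `(x_n)` is `C`-dominated by `(y_n)`. -/
def DominatedBy {X : Type*} {Y : Type*} [NormedAddCommGroup X] [Module ℝ X]
    [NormedAddCommGroup Y] [Module ℝ Y] (C : ℝ) (x : ℕ → X) (y : ℕ → Y) : Prop :=
  ∀ a : ℕ →₀ ℝ, ‖a.sum fun n r => r • x n‖ ≤ C * ‖a.sum fun n r => r • y n‖

/-- Upper block estimates, with constant `C`, with respect to a sequence `w`. -/
def FDD.UpperBlockEst {Z V : Type*} [NormedAddCommGroup Z] [NormedSpace ℝ Z]
    [NormedAddCommGroup V] [Module ℝ V] (F : FDD Z) (w : ℕ → V) (C : ℝ) : Prop :=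
  ∀ z : ℕ → Z, F.IsBlockSeq z → (∀ n, ‖z n‖ = 1) →
    DominatedBy C z fun n => w (F.minSupp (z n))

/-- Lower block estimates, with constant `C`, with respect to a sequence `w`. -/
def FDD.LowerBlockEst {Z V : Type*} [NormedAddCommGroup Z] [NormedSpace ℝ Z]
    [NormedAddCommGroup V] [Module ℝ V] (F : FDD Z) (w : ℕ → V) (C : ℝ) : Prop :=
  ∀ z : ℕ → Z, F.IsBlockSeq z → (∀ n, ‖z n‖ = 1) →
    DominatedBy C (fun n => w (F.minSupp (z n))) z

/-! ### Schauder bases -/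

/-- A Schauder basis of `V`, bundled with its (automatically continuous) coordinate
functionals. -/
structure SchauderBasis' (V : Type*) [NormedAddCommGroup V] [NormedSpace ℝ V] where
  v : ℕ → V
  coord : ℕ → V →L[ℝ] ℝ
  biorth : ∀ n m, coord n (v m) = if n = m then (1 : ℝ) else 0
  expand : ∀ x : V,
    Filter.Tendsto (fun N => ∑ n ∈ Finset.range N, coord n x • v n) Filter.atTop (nhds x)

/-- A block sequence of basis vectors, described by its (finitely supported) coefficients:
nonzero with successive supports. -/
def IsCoeffBlockSeq (a : ℕ → ℕ →₀ ℝ) : Prop :=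
  (∀ n, a n ≠ 0) ∧ ∀ n, ∀ i ∈ (a n).support, ∀ j ∈ (a (n + 1)).support, i < j

namespace SchauderBasis'

variable {V : Type*} [NormedAddCommGroup V] [NormedSpace ℝ V] (B : SchauderBasis' V)

/-- The vector `Σ_n a_n v_n` for finitely supported coefficients. -/
def vec (a : ℕ →₀ ℝ) : V := a.sum fun n r => r • B.v n

/-- The basis is normalized. -/
def Normalized : Prop := ∀ n, ‖B.v n‖ = 1

/-- The basis is `1`-unconditional. -/
def Unconditional : Prop :=
  ∀ a b : ℕ →₀ ℝ, (∀ n, |a n| ≤ |b n|) → ‖B.vec a‖ ≤ ‖B.vec b‖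

/-- The basis is shrinking. -/
def Shrinking : Prop :=
  ∀ f : V →L[ℝ] ℝ,
    Filter.Tendsto
      (fun N => sSup {r : ℝ | ∃ x ∈ closure (Submodule.span ℝ (B.v '' Set.Ici N) : Set V),
        ‖x‖ ≤ 1 ∧ r = |f x|})
      Filter.atTop (nhds 0)

/-- `D`-right dominance. -/
def RightDominant (D : ℝ) : Prop :=
  ∀ k l : ℕ → ℕ, StrictMono k → StrictMono l → (∀ n, k n ≤ l n) →
    DominatedBy D (fun n => B.v (k n)) fun n => B.v (l n)


/-- The basis satisfies subsequential `C`-`V`-upper block estimates in `V` itself. -/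
def UpperBlockEstSelf (C : ℝ) : Prop :=
  ∀ a : ℕ → ℕ →₀ ℝ, ∀ h : IsCoeffBlockSeq a, (∀ n, ‖B.vec (a n)‖ = 1) →
    DominatedBy C (fun n => B.vec (a n)) fun n =>
      B.v ((a n).support.min' (Finsupp.support_nonempty_iff.mpr (h.1 n)))

/-- The basis satisfies subsequential `C`-`V`-lower block estimates in `V` itself. -/
def LowerBlockEstSelf (C : ℝ) : Prop :=
  ∀ a : ℕ → ℕ →₀ ℝ, ∀ h : IsCoeffBlockSeq a, (∀ n, ‖B.vec (a n)‖ = 1) →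
    DominatedBy C
      (fun n => B.v ((a n).support.min' (Finsupp.support_nonempty_iff.mpr (h.1 n))))
      fun n => B.vec (a n)

end SchauderBasis'


namespace FDD

variable {Z : Type*} [NormedAddCommGroup Z] [NormedSpace ℝ Z] (F : FDD Z)

lemma proj_of_mem' {m : ℕ} {w : Z} (hw : w ∈ F.E m) (n : ℕ) :
    F.proj n w = if n = m then w else 0 := by
  have h := F.rep_unique w (fun i => if i = m then w else 0) ?_ ?_ n
  · exact h.symm
  · intro i
    show (if i = m then w else 0) ∈ F.E i
    split_ifs with h
    · subst h; exact hw
    · exact zero_mem _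
  · apply tendsto_atTop_of_eventually_const (i₀ := m + 1)
    intro N hN
    rw [Finset.sum_ite_eq' (Finset.range N) m (fun _ => w)]
    simp [Finset.mem_range.mpr (Nat.lt_of_succ_le hN)]

lemma proj_proj' (n m : ℕ) (z : Z) :
    F.proj n (F.proj m z) = if n = m then F.proj m z else 0 :=
  F.proj_of_mem' (F.proj_mem m z) n

lemma proj_eq_zero_of_sum {s : Finset ℕ} {z : Z} (hz : (∑ i ∈ s, F.proj i z) = z)
    {j : ℕ} (hj : j ∉ s) : F.proj j z = 0 := by
  conv_lhs => rw [← hz]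
  rw [map_sum]
  refine Finset.sum_eq_zero fun i hi => ?_
  rw [F.proj_proj' j i z, if_neg]
  rintro rfl; exact hj hi

lemma exists_unit (m : ℕ) : ∃ e : Z, e ∈ F.E m ∧ ‖e‖ = 1 := by
  obtain ⟨x, hx, hx0⟩ := (Submodule.ne_bot_iff _).mp (F.nontrivial m)
  refine ⟨‖x‖⁻¹ • x, Submodule.smul_mem _ _ hx, ?_⟩
  rw [norm_smul, norm_inv, norm_norm, inv_mul_cancel₀ (norm_ne_zero_iff.mpr hx0)]

end FDD

lemma SchauderBasis'.vec_sum_single {V : Type*} [NormedAddCommGroup V] [NormedSpace ℝ V]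
    (B : SchauderBasis' V) (s : Finset ℕ) (m : ℕ → ℕ) (c : ℕ → ℝ) :
    B.vec (∑ n ∈ s, Finsupp.single (m n) (c n)) = ∑ n ∈ s, c n • B.v (m n) := by
  classical
  induction s using Finset.cons_induction with
  | empty => simp [SchauderBasis'.vec]
  | cons a s ha ih =>
      rw [Finset.sum_cons, Finset.sum_cons, ← ih]
      unfold SchauderBasis'.vec
      rw [Finsupp.sum_add_index' (fun i => zero_smul ℝ (B.v i))
        (fun i r t => add_smul r t (B.v i)),
        Finsupp.sum_single_index (h := fun n r => r • B.v n) (zero_smul ℝ _)]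
/-- Operator-norm version of upper block estimates (Section 6). -/
theorem operator_upper_block_estimate
    {V : Type*} [NormedAddCommGroup V] [NormedSpace ℝ V] [CompleteSpace V]
    (B : SchauderBasis' V) (hN : B.Normalized) (hU : B.Unconditional)
    (C : ℝ) (hC : 1 ≤ C)
    {X E : Type*} [NormedAddCommGroup X] [NormedSpace ℝ X] [CompleteSpace X]
    [NormedAddCommGroup E] [NormedSpace ℝ E] [CompleteSpace E]
    (F : FDD E) (hup : F.UpperBlockEst B.v C)
    (ℓ : ℕ) (k : ℕ → ℕ) (hk0 : k 0 = 0) (hk : ∀ n < ℓ, k n < k (n + 1))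
    (u : ℕ → X →L[ℝ] E)
    (hu : ∀ n < ℓ, ∀ x : X,
      (∑ i ∈ Finset.Ico (k n) (k (n + 1)), F.proj i (u n x)) = u n x) :
    ‖∑ n ∈ Finset.range ℓ, u n‖ ≤ C * ‖∑ n ∈ Finset.range ℓ, ‖u n‖ • B.v (k n)‖ := by
  classical
  have hCnn : (0:ℝ) ≤ C := le_trans zero_le_one hC
  apply ContinuousLinearMap.opNorm_le_of_unit_norm (mul_nonneg hCnn (norm_nonneg _))
  intro x hx
  choose e he1 he2 using F.exists_unit
  have he0 : ∀ m, e m ≠ 0 := fun m => norm_ne_zero_iff.mp (by rw [he2 m]; exact one_ne_zero)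
  set z : ℕ → E := fun n => u n x with hzdef
  have hznorm : ∀ n, ‖z n‖ ≤ ‖u n‖ := by
    intro n
    calc ‖z n‖ ≤ ‖u n‖ * ‖x‖ := (u n).le_opNorm x
    _ = ‖u n‖ := by rw [hx, mul_one]
  have key : ∀ δ : ℝ, 0 < δ →
      ‖∑ n ∈ Finset.range ℓ, z n‖ ≤
        ℓ * δ + C * ‖∑ n ∈ Finset.range ℓ, (‖u n‖ + δ) • B.v (k n)‖ := by
    intro δ hδ
    set δf : ℕ → ℝ := fun n =>
      if F.proj (k n) (z n) + δ • e (k n) = 0 then δ / 2 else δ with hδfdef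
    have hδf_pos : ∀ n, 0 < δf n := by
      intro n; rw [hδfdef]; dsimp only; split_ifs
      · linarith
      · exact hδ
    have hδf_le : ∀ n, δf n ≤ δ := by
      intro n; rw [hδfdef]; dsimp only; split_ifs
      · linarith
      · exact le_rfl
    set y : ℕ → E := fun n => z n + δf n • e (k n) with hydef
    have hproj_e : ∀ m j, F.proj j (e m) = if j = m then e m else 0 :=
      fun m j => F.proj_of_mem' (he1 m) j
    have hproj_y_kn : ∀ n, F.proj (k n) (y n) =
        F.proj (k n) (z n) + δf n • e (k n) := by
      intro n
      rw [hydef]; dsimp only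
      rw [map_add, map_smul, hproj_e (k n) (k n), if_pos rfl]
    have hproj_y_ne : ∀ n, F.proj (k n) (y n) ≠ 0 := by
      intro n
      rw [hproj_y_kn n, hδfdef]; dsimp only
      split_ifs with h
      · have hzz : F.proj (k n) (z n) = (-δ) • e (k n) := by
          rw [neg_smul]; exact eq_neg_of_add_eq_zero_left h
        rw [hzz, ← add_smul]
        simp only [ne_eq, smul_eq_zero, not_or]
        exact ⟨by linarith, he0 _⟩
      · exact h
    have hy_ne : ∀ n, y n ≠ 0 := by
      intro n hcon
      exact hproj_y_ne n (by rw [hcon, map_zero])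
    have hy_norm_pos : ∀ n, 0 < ‖y n‖ := fun n => norm_pos_iff.mpr (hy_ne n)
    have hy_le : ∀ n, ‖y n‖ ≤ ‖u n‖ + δ := by
      intro n
      calc ‖y n‖ ≤ ‖z n‖ + ‖δf n • e (k n)‖ := norm_add_le _ _
      _ = ‖z n‖ + δf n := by
          rw [norm_smul, he2, mul_one, Real.norm_eq_abs, abs_of_pos (hδf_pos n)]
      _ ≤ ‖u n‖ + δ := add_le_add (hznorm n) (hδf_le n)
    have hproj_y_zero : ∀ n < ℓ, ∀ j, j ∉ Finset.Ico (k n) (k (n + 1)) →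
        F.proj j (y n) = 0 := by
      intro n hn j hj
      have hjk : j ≠ k n := by
        intro hcon; subst hcon
        exact hj (Finset.mem_Ico.mpr ⟨le_rfl, hk n hn⟩)
      rw [hydef]; dsimp only
      rw [map_add, map_smul, hproj_e (k n) j, if_neg hjk, smul_zero, add_zero]
      exact F.proj_eq_zero_of_sum (hu n hn x) hj
    set b : ℕ → E := fun n =>
      if n < ℓ then ‖y n‖⁻¹ • y n else e (k ℓ + (n - ℓ)) with hbdef
    have hb_norm : ∀ n, ‖b n‖ = 1 := by
      intro n; rw [hbdef]; dsimp only; split_ifs with h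
      · exact norm_smul_inv_norm (hy_ne n)
      · exact he2 _
    have hb_ne : ∀ n, b n ≠ 0 := by
      intro n
      exact norm_ne_zero_iff.mp (by rw [hb_norm n]; exact one_ne_zero)
    have hsupp_lt : ∀ n < ℓ, ∀ j ∈ F.supp (b n), k n ≤ j ∧ j < k (n + 1) := by
      intro n hn j hj
      simp only [FDD.supp, Set.mem_setOf_eq, hbdef, if_pos hn] at hj
      rw [map_smul] at hj
      have hyj : F.proj j (y n) ≠ 0 := by
        intro hcon; rw [hcon, smul_zero] at hj; exact hj rfl
      by_contra hcon
      exact hyj (hproj_y_zero n hn j (by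
        intro hmem; exact hcon (Finset.mem_Ico.mp hmem)))
    have hmem_lt : ∀ n < ℓ, k n ∈ F.supp (b n) := by
      intro n hn
      simp only [FDD.supp, Set.mem_setOf_eq, hbdef, if_pos hn, map_smul]
      exact smul_ne_zero (inv_ne_zero (ne_of_gt (hy_norm_pos n))) (hproj_y_ne n)
    have hsupp_ge : ∀ n, ℓ ≤ n → ∀ j, j ∈ F.supp (b n) ↔ j = k ℓ + (n - ℓ) := by
      intro n hn j
      simp only [FDD.supp, Set.mem_setOf_eq, hbdef, if_neg (not_lt.mpr hn)]
      rw [hproj_e]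
      constructor
      · intro h; by_contra hc; rw [if_neg hc] at h; exact h rfl
      · intro h; rw [if_pos h]; exact he0 _
    have hblock : F.IsBlockSeq b := by
      refine ⟨hb_ne, ?_, ?_⟩
      · intro n
        by_cases h : n < ℓ
        · exact (Set.finite_Ico (k n) (k (n + 1))).subset fun j hj =>
            Set.mem_Ico.mpr (hsupp_lt n h j hj)
        · exact (Set.finite_singleton (k ℓ + (n - ℓ))).subset fun j hj =>
            Set.mem_singleton_iff.mpr ((hsupp_ge n (not_lt.mp h) j).mp hj)
      · intro n i hi j hj
        by_cases h1 : n + 1 < ℓ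
        · have hn : n < ℓ := by omega
          have h2 := (hsupp_lt n hn i hi).2
          have h3 := (hsupp_lt (n + 1) h1 j hj).1
          omega
        · by_cases h2 : n < ℓ
          · have hℓ : n + 1 = ℓ := by omega
            have h3 := (hsupp_lt n h2 i hi).2
            have h4 := (hsupp_ge (n + 1) (by omega) j).mp hj
            rw [← hℓ] at h4
            omega
          · have h3 := (hsupp_ge n (by omega) i).mp hi
            have h4 := (hsupp_ge (n + 1) (by omega) j).mp hj
            omega
    have hmin : ∀ n < ℓ, F.minSupp (b n) = k n := by
      intro n hn
      refine le_antisymm (Nat.sInf_le (hmem_lt n hn)) ?_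
      have hne : (F.supp (b n)).Nonempty := ⟨k n, hmem_lt n hn⟩
      exact (hsupp_lt n hn _ (Nat.sInf_mem hne)).1
    -- the coefficient finsupp
    set a : ℕ →₀ ℝ := Finsupp.onFinset (Finset.range ℓ)
      (fun n => if n < ℓ then ‖y n‖ else 0)
      (fun n h => Finset.mem_range.mpr (by by_contra hc; exact h (if_neg hc))) with hadef
    have hasupp : a.support ⊆ Finset.range ℓ := Finsupp.support_onFinset_subset
    have haapp : ∀ n < ℓ, a n = ‖y n‖ := by
      intro n hn; rw [hadef, Finsupp.onFinset_apply, if_pos hn]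
    have hsum1 : (a.sum fun n r => r • b n) = ∑ n ∈ Finset.range ℓ, y n := by
      rw [Finsupp.sum_of_support_subset a hasupp _ (fun i _ => zero_smul ℝ (b i))]
      refine Finset.sum_congr rfl fun n hn => ?_
      have hn' := Finset.mem_range.mp hn
      rw [haapp n hn', hbdef]; dsimp only
      rw [if_pos hn', smul_smul, mul_inv_cancel₀ (ne_of_gt (hy_norm_pos n)), one_smul]
    have hsum2 : (a.sum fun n r => r • B.v (F.minSupp (b n))) =
        ∑ n ∈ Finset.range ℓ, ‖y n‖ • B.v (k n) := by
      rw [Finsupp.sum_of_support_subset a hasupp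
        (fun n r => r • B.v (F.minSupp (b n))) (fun i _ => zero_smul ℝ _)]
      refine Finset.sum_congr rfl fun n hn => ?_
      have hn' := Finset.mem_range.mp hn
      rw [haapp n hn', hmin n hn']
    have hdom := hup b hblock hb_norm a
    rw [hsum1, hsum2] at hdom
    -- unconditionality step
    have hunc : ‖∑ n ∈ Finset.range ℓ, ‖y n‖ • B.v (k n)‖ ≤
        ‖∑ n ∈ Finset.range ℓ, (‖u n‖ + δ) • B.v (k n)‖ := by
      have h := hU (∑ n ∈ Finset.range ℓ, Finsupp.single (k n) ‖y n‖)
        (∑ n ∈ Finset.range ℓ, Finsupp.single (k n) (‖u n‖ + δ)) ?_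
      · rwa [SchauderBasis'.vec_sum_single, SchauderBasis'.vec_sum_single] at h
      · intro m
        rw [Finset.sum_apply', Finset.sum_apply']
        have h1 : (0:ℝ) ≤ ∑ n ∈ Finset.range ℓ, (Finsupp.single (k n) ‖y n‖) m := by
          refine Finset.sum_nonneg fun n _ => ?_
          rw [Finsupp.single_apply]; split_ifs
          · exact norm_nonneg _
          · exact le_rfl
        have h2 : (0:ℝ) ≤ ∑ n ∈ Finset.range ℓ, (Finsupp.single (k n) (‖u n‖ + δ)) m := by
          refine Finset.sum_nonneg fun n _ => ?_
          rw [Finsupp.single_apply]; split_ifs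
          · positivity
          · exact le_rfl
        rw [abs_of_nonneg h1, abs_of_nonneg h2]
        refine Finset.sum_le_sum fun n _ => ?_
        rw [Finsupp.single_apply, Finsupp.single_apply]
        split_ifs
        · exact hy_le n
        · exact le_rfl
    -- final chain
    have hysum : ∑ n ∈ Finset.range ℓ, y n =
        (∑ n ∈ Finset.range ℓ, z n) + ∑ n ∈ Finset.range ℓ, δf n • e (k n) := by
      rw [← Finset.sum_add_distrib]
    have hpert : ‖∑ n ∈ Finset.range ℓ, δf n • e (k n)‖ ≤ ℓ * δ := by
      calc ‖∑ n ∈ Finset.range ℓ, δf n • e (k n)‖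
          ≤ ∑ n ∈ Finset.range ℓ, ‖δf n • e (k n)‖ := norm_sum_le _ _
      _ ≤ ∑ n ∈ Finset.range ℓ, δ := by
          refine Finset.sum_le_sum fun n _ => ?_
          rw [norm_smul, he2, mul_one, Real.norm_eq_abs, abs_of_pos (hδf_pos n)]
          exact hδf_le n
      _ = ℓ * δ := by rw [Finset.sum_const, Finset.card_range, nsmul_eq_mul]
    have hzy : ‖∑ n ∈ Finset.range ℓ, z n‖ ≤
        ‖∑ n ∈ Finset.range ℓ, y n‖ + ℓ * δ := by
      have : (∑ n ∈ Finset.range ℓ, z n) =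
          (∑ n ∈ Finset.range ℓ, y n) - ∑ n ∈ Finset.range ℓ, δf n • e (k n) := by
        rw [hysum]; abel
      rw [this]
      exact le_trans (norm_sub_le _ _) (by linarith)
    have hstep : ‖∑ n ∈ Finset.range ℓ, y n‖ ≤
        C * ‖∑ n ∈ Finset.range ℓ, (‖u n‖ + δ) • B.v (k n)‖ :=
      le_trans hdom (mul_le_mul_of_nonneg_left hunc hCnn)
    linarith
  -- limiting argument
  have hcont : Filter.Tendsto
      (fun δ : ℝ => (ℓ : ℝ) * δ + C * ‖∑ n ∈ Finset.range ℓ, (‖u n‖ + δ) • B.v (k n)‖)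
      (nhdsWithin 0 (Set.Ioi 0))
      (nhds ((ℓ : ℝ) * 0 + C * ‖∑ n ∈ Finset.range ℓ, (‖u n‖ + 0) • B.v (k n)‖)) := by
    apply Filter.Tendsto.mono_left _ nhdsWithin_le_nhds
    apply Continuous.tendsto
    fun_prop
  have hle : ‖∑ n ∈ Finset.range ℓ, z n‖ ≤
      (ℓ : ℝ) * 0 + C * ‖∑ n ∈ Finset.range ℓ, (‖u n‖ + 0) • B.v (k n)‖ := by
    refine ge_of_tendsto hcont ?_
    filter_upwards [self_mem_nhdsWithin] with δ hδ
    exact key δ hδ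
  simp only [mul_zero, zero_add, add_zero] at hle
  calc ‖(∑ n ∈ Finset.range ℓ, u n) x‖ = ‖∑ n ∈ Finset.range ℓ, z n‖ := by
        rw [ContinuousLinearMap.sum_apply]
  _ ≤ C * ‖∑ n ∈ Finset.range ℓ, ‖u n‖ • B.v (k n)‖ := hle
end
end
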